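/- Let G be a finite directed multigraph and let A = {a_1, …, a_k}, B = {b_1, …, b_k} be ordered k-subsets of its vertices. Suppose (P, C) with P = (P_1, …, P_k) ∈ 𝒫̃_{A,B}(G) and C ∈ 𝒞(G) is not a self-avoiding flow, and let i be minimal such that P_i is not self-avoiding, or P_i meets C, or P_i meets some P_{i'} with i' > i. If the first offending vertex along P_i (the tail of the earliest edge e_q of P_i lying on C, on a later P_{i'}, or repeated as a tail within P_i) lies on some P_{i'} with i' > i, then swapping the tails of P_i and P_{i'} at that vertex produces a path collection P* ∈ 𝒫̃_{A,B}(G) with P* ≠ P, using exactly the same multiset of edges as P (so wt(P*) = wt(P)), whose associated permutation differs from that of P by a transposition (so sgn(P*) = − sgn(P)). -/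

import Mathlib

open MvPowerSeries

noncomputable section

namespace PathMatrix

variable {n k : ℕ} {E : Type} [Fintype E]

/-- `IsWalkFrom src tgt u v l` : the list of edges `l` forms a directed walk (path)
from vertex `u` to vertex `v`, traversing the edges head-to-tail. -/
def IsWalkFrom (src tgt : E → Fin n) : Fin n → Fin n → List E → Prop
  | u, v, [] => u = v
  | u, v, e :: l => src e = u ∧ IsWalkFrom src tgt (tgt e) v l

/-- The weight of a path: the product of the variables of its edges (with multiplicity). -/
def pathWt (l : List E) : MvPowerSeries E ℤ :=
  (l.map fun e => (X e : MvPowerSeries E ℤ)).prod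

/-- The weighted adjacency matrix. -/
def adjMat (src tgt : E → Fin n) : Matrix (Fin n) (Fin n) (MvPowerSeries E ℤ) :=
  fun i j => ∑ e : E, if src e = i ∧ tgt e = j then (X e : MvPowerSeries E ℤ) else 0

/-- The list of vertices visited by a walk starting at `u` with edge list `l`. -/
def walkVerts (tgt : E → Fin n) (u : Fin n) (l : List E) : List (Fin n) :=
  u :: l.map tgt

/-- A self-avoiding cycle, recorded as a list of edges starting (canonically) at the
least vertex it visits. -/
def IsCycleMin (src tgt : E → Fin n) (l : List E) : Prop :=
  l ≠ [] ∧ ∃ v : Fin n, IsWalkFrom src tgt v v l ∧ (l.map src).Nodup ∧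
    ∀ u ∈ l.map src, v ≤ u

/-- `𝒞(G)`: collections of pairwise vertex-disjoint self-avoiding cycles. -/
def CycColls (src tgt : E → Fin n) : Set (Finset (List E)) :=
  {C | (∀ l ∈ C, IsCycleMin src tgt l) ∧
    ∀ l ∈ C, ∀ l' ∈ C, l ≠ l' → ∀ v ∈ l.map src, v ∉ l'.map src}

/-- The weight of a cycle collection. -/
def cycWt (C : Finset (List E)) : MvPowerSeries E ℤ := ∏ l ∈ C, pathWt l

/-- The sign of a cycle collection, `(-1)^{number of cycles}`. -/
def cycSgn (C : Finset (List E)) : ℤ := (-1) ^ C.card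

/-- Membership in `𝒫̃_{A,B,π}(G)`. -/
def TuplePaths (src tgt : E → Fin n) (a b : Fin k → Fin n)
    (π : Equiv.Perm (Fin k)) (P : Fin k → List E) : Prop :=
  ∀ i, IsWalkFrom src tgt (a i) (b (π i)) (P i)

/-- Membership in `𝒫_{A,B,π}(G)`: self-avoiding, pairwise vertex-disjoint paths. -/
def IsSystem (src tgt : E → Fin n) (a b : Fin k → Fin n)
    (π : Equiv.Perm (Fin k)) (P : Fin k → List E) : Prop :=
  TuplePaths src tgt a b π P ∧
  (∀ i, (walkVerts tgt (a i) (P i)).Nodup) ∧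
  ∀ i j, i ≠ j → ∀ v ∈ walkVerts tgt (a i) (P i), v ∉ walkVerts tgt (a j) (P j)

/-- `ℱ_{A,B}(G)`: self-avoiding flows `(π, P, C)`. -/
def Flows (src tgt : E → Fin n) (a b : Fin k → Fin n) :
    Set (Equiv.Perm (Fin k) × (Fin k → List E) × Finset (List E)) :=
  {F | IsSystem src tgt a b F.1 F.2.1 ∧ F.2.2 ∈ CycColls src tgt ∧
    ∀ i, ∀ v ∈ walkVerts tgt (a i) (F.2.1 i), ∀ l ∈ F.2.2, v ∉ l.map src}

/-- The weight of a path collection. -/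
def colWt (P : Fin k → List E) : MvPowerSeries E ℤ := ∏ i, pathWt (P i)

/-- The sign and weight of a flow. -/
def flowSgn (F : Equiv.Perm (Fin k) × (Fin k → List E) × Finset (List E)) : ℤ :=
  (Equiv.Perm.sign F.1 : ℤ) * cycSgn F.2.2

def flowWt (F : Equiv.Perm (Fin k) × (Fin k → List E) × Finset (List E)) :
    MvPowerSeries E ℤ :=
  colWt F.2.1 * cycWt F.2.2

/-- The product (coefficientwise) topology on formal power series, with `ℤ` discrete. -/
instance : TopologicalSpace (MvPowerSeries E ℤ) :=
  inferInstanceAs (TopologicalSpace ((E →₀ ℕ) → ℤ))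


/-- Path `P i` "offends": it is not self-avoiding, or meets the cycle collection `C`,
or meets a later path `P i'` with `i' > i`. -/
def OffendsAt (src tgt : E → Fin n) (a : Fin k → Fin n) (P : Fin k → List E)
    (C : Finset (List E)) (i : Fin k) : Prop :=
  ¬ (walkVerts tgt (a i) (P i)).Nodup ∨
  (∃ v ∈ walkVerts tgt (a i) (P i), ∃ l ∈ C, v ∈ l.map src) ∨
  (∃ i', i < i' ∧ ∃ v ∈ walkVerts tgt (a i) (P i), v ∈ walkVerts tgt (a i') (P i'))

/-- The tail of the `q`-th edge of `P i` offends: it lies on `C`, or on a later path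
`P i'` with `i' > i`, or it recurs as the tail of a later edge of `P i`. -/
def TailOffends (src tgt : E → Fin n) (a : Fin k → Fin n) (P : Fin k → List E)
    (C : Finset (List E)) (i : Fin k) (q : ℕ) : Prop :=
  ∃ hq : q < (P i).length,
    (∃ l ∈ C, src ((P i).get ⟨q, hq⟩) ∈ l.map src) ∨
    (∃ i', i < i' ∧ src ((P i).get ⟨q, hq⟩) ∈ walkVerts tgt (a i') (P i')) ∨
    (∃ r, ∃ hr : r < (P i).length, q < r ∧
      src ((P i).get ⟨r, hr⟩) = src ((P i).get ⟨q, hq⟩))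

section TailSwapAux

lemma isWalkFrom_append {src tgt : E → Fin n} {u v w : Fin n} {l1 l2 : List E}
    (h1 : IsWalkFrom src tgt u v l1) (h2 : IsWalkFrom src tgt v w l2) :
    IsWalkFrom src tgt u w (l1 ++ l2) := by
  induction l1 generalizing u with
  | nil =>
    have : u = v := h1
    subst this; simpa using h2
  | cons e t ih => exact ⟨h1.1, ih h1.2⟩

lemma isWalkFrom_split_edge {src tgt : E → Fin n} {u w : Fin n} {l : List E}
    (h : IsWalkFrom src tgt u w l) (q : ℕ) (hq : q < l.length) :
    IsWalkFrom src tgt u (src (l.get ⟨q, hq⟩)) (l.take q) ∧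
    IsWalkFrom src tgt (src (l.get ⟨q, hq⟩)) w (l.drop q) := by
  induction l generalizing u q with
  | nil => simp at hq
  | cons e t ih =>
    cases q with
    | zero => exact ⟨h.1.symm, ⟨rfl, h.2⟩⟩
    | succ j =>
      have hj : j < t.length := by simpa using hq
      exact ⟨⟨h.1, (ih h.2 j hj).1⟩, (ih h.2 j hj).2⟩

lemma isWalkFrom_split_vert {src tgt : E → Fin n} {u w : Fin n} {l : List E}
    (h : IsWalkFrom src tgt u w l) (q : ℕ) (hq : q < (walkVerts tgt u l).length) :
    IsWalkFrom src tgt u ((walkVerts tgt u l).get ⟨q, hq⟩) (l.take q) ∧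
    IsWalkFrom src tgt ((walkVerts tgt u l).get ⟨q, hq⟩) w (l.drop q) := by
  induction l generalizing u q with
  | nil =>
    cases q with
    | zero => exact ⟨rfl, h⟩
    | succ j => simp [walkVerts] at hq
  | cons e t ih =>
    cases q with
    | zero => exact ⟨rfl, h⟩
    | succ j =>
      have hj : j < (walkVerts tgt (tgt e) t).length := by
        simp [walkVerts] at hq ⊢; omega
      exact ⟨⟨h.1, (ih h.2 j hj).1⟩, (ih h.2 j hj).2⟩

lemma isWalkFrom_unique {src tgt : E → Fin n} {u w w' : Fin n} {l : List E}
    (h : IsWalkFrom src tgt u w l) (h' : IsWalkFrom src tgt u w' l) : w = w' := by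
  induction l generalizing u with
  | nil => exact (h : u = w).symm.trans h'
  | cons e t ih => exact ih h.2 h'.2

lemma pathWt_eq_multiset (l : List E) :
    pathWt l = ((l : Multiset E).map fun e => (X e : MvPowerSeries E ℤ)).prod := by
  simp [pathWt]

lemma prod_pathWt_eq (s : Finset (Fin k)) (Q : Fin k → List E) :
    ∏ j ∈ s, pathWt (Q j) =
      ((∑ j ∈ s, ((Q j : List E) : Multiset E)).map
        fun e => (X e : MvPowerSeries E ℤ)).prod := by
  classical
  induction s using Finset.induction with
  | empty => simp
  | insert x s hx ih =>
    rw [Finset.prod_insert hx, Finset.sum_insert hx, Multiset.map_add,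
      Multiset.prod_add, ih, pathWt_eq_multiset]

end TailSwapAux

/-- the tail-swapping case of the involution.  Suppose `(P, C)` is
not a self-avoiding flow, `i` is minimal such that `P i` offends, the tail `v` of the
`q`-th edge of `P i` is the first offending vertex along `P i`, and `v` lies on a later
path; let `i' > i` be minimal with `v` on `P i'` and `q'` the first position of `v`
along `P i'`.  Then swapping the tails of `P i` and `P i'` at `v` produces
`P* ∈ 𝒫̃_{A,B}(G)` with `P* ≠ P`, using the same multiset of edges as `P` (so
`wt P* = wt P`), and whose permutation differs from `π` by the transposition `(i i')`
(so the sign is reversed). -/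
theorem tail_swap (src tgt : E → Fin n) (a b : Fin k → Fin n)
    (ha : Function.Injective a) (hb : Function.Injective b)
    (π : Equiv.Perm (Fin k)) (P : Fin k → List E) (C : Finset (List E))
    (hP : TuplePaths src tgt a b π P) (hC : C ∈ CycColls src tgt)
    (i : Fin k) (hi : OffendsAt src tgt a P C i)
    (himin : ∀ j, OffendsAt src tgt a P C j → i ≤ j)
    (q : ℕ) (hq : q < (P i).length) (v : Fin n)
    (hv : src ((P i).get ⟨q, hq⟩) = v)
    (hqoff : TailOffends src tgt a P C i q)
    (hqmin : ∀ r, TailOffends src tgt a P C i r → q ≤ r)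
    (i' : Fin k) (hii' : i < i') (hvi' : v ∈ walkVerts tgt (a i') (P i'))
    (hi'min : ∀ j, i < j → v ∈ walkVerts tgt (a j) (P j) → i' ≤ j)
    (q' : ℕ) (hq' : q' < (walkVerts tgt (a i') (P i')).length)
    (hvq' : (walkVerts tgt (a i') (P i')).get ⟨q', hq'⟩ = v)
    (hq'min : ∀ r (hr : r < (walkVerts tgt (a i') (P i')).length),
      (walkVerts tgt (a i') (P i')).get ⟨r, hr⟩ = v → q' ≤ r) :
    ∀ P' : Fin k → List E,
      P' = Function.update
          (Function.update P i ((P i).take q ++ (P i').drop q')) i'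
          ((P i').take q' ++ (P i).drop q) →
      TuplePaths src tgt a b (π * Equiv.swap i i') P' ∧
      P' ≠ P ∧
      (∑ j : Fin k, ((P' j : List E) : Multiset E)) =
        (∑ j : Fin k, ((P j : List E) : Multiset E)) ∧
      colWt P' = colWt P ∧
      Equiv.Perm.sign (π * Equiv.swap i i') = - Equiv.Perm.sign π := by
  intro P' hP'
  have hne : i ≠ i' := ne_of_lt hii'
  have hne' : i' ≠ i := hne.symm
  have hwiA := (isWalkFrom_split_edge (hP i) q hq).1
  have hwiB := (isWalkFrom_split_edge (hP i) q hq).2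
  rw [hv] at hwiA hwiB
  have hwi'A := (isWalkFrom_split_vert (hP i') q' hq').1
  have hwi'B := (isWalkFrom_split_vert (hP i') q' hq').2
  rw [hvq'] at hwi'A hwi'B
  have wA : IsWalkFrom src tgt (a i) (b (π i')) ((P i).take q ++ (P i').drop q') :=
    isWalkFrom_append hwiA hwi'B
  have wB : IsWalkFrom src tgt (a i') (b (π i)) ((P i').take q' ++ (P i).drop q) :=
    isWalkFrom_append hwi'A hwiB
  have hP'i : P' i = (P i).take q ++ (P i').drop q' := by
    rw [hP', Function.update_of_ne hne, Function.update_self]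
  have hP'i' : P' i' = (P i').take q' ++ (P i).drop q := by
    rw [hP', Function.update_self]
  have hP'j : ∀ j, j ≠ i → j ≠ i' → P' j = P j := by
    intro j hj hj'
    rw [hP', Function.update_of_ne hj', Function.update_of_ne hj]
  have hms : (∑ j : Fin k, ((P' j : List E) : Multiset E)) =
      (∑ j : Fin k, ((P j : List E) : Multiset E)) := by
    have key : ∀ j : Fin k, ((P' j : List E) : Multiset E) =
        Function.update (Function.update (fun j => ((P j : List E) : Multiset E)) i
          (((P i).take q ++ (P i').drop q' : List E) : Multiset E)) i'
          (((P i').take q' ++ (P i).drop q : List E) : Multiset E) j := by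
      intro j
      rcases eq_or_ne j i with rfl | hj
      · rw [hP'i, Function.update_of_ne hne, Function.update_self]
      rcases eq_or_ne j i' with rfl | hj'
      · rw [hP'i', Function.update_self]
      · rw [hP'j j hj hj', Function.update_of_ne hj', Function.update_of_ne hj]
    calc (∑ j : Fin k, ((P' j : List E) : Multiset E))
        = ∑ j : Fin k, Function.update (Function.update
            (fun j => ((P j : List E) : Multiset E)) i
            (((P i).take q ++ (P i').drop q' : List E) : Multiset E)) i'
            (((P i').take q' ++ (P i).drop q : List E) : Multiset E) j :=
          Finset.sum_congr rfl fun j _ => key j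
      _ = (∑ j : Fin k, ((P j : List E) : Multiset E)) := by
          rw [Finset.sum_update_of_mem (Finset.mem_univ i'),
            Finset.sum_update_of_mem (by simp [hne] : i ∈ Finset.univ \ {i'}),
            Finset.sum_eq_sum_sdiff_singleton_add (Finset.mem_univ i')
              (fun j => ((P j : List E) : Multiset E)),
            Finset.sum_eq_sum_sdiff_singleton_add
              (by simp [hne] : i ∈ Finset.univ \ {i'})
              (fun j => ((P j : List E) : Multiset E))]
          have e1 : (((P i).take q ++ (P i').drop q' : List E) : Multiset E) =
              ((P i).take q : Multiset E) + ((P i').drop q' : Multiset E) :=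
            (Multiset.coe_add _ _).symm
          have e2 : (((P i').take q' ++ (P i).drop q : List E) : Multiset E) =
              ((P i').take q' : Multiset E) + ((P i).drop q : Multiset E) :=
            (Multiset.coe_add _ _).symm
          have e3 : ((P i).take q : Multiset E) + ((P i).drop q : Multiset E) =
              ((P i : List E) : Multiset E) := by
            rw [Multiset.coe_add, List.take_append_drop]
          have e4 : ((P i').take q' : Multiset E) + ((P i').drop q' : Multiset E) =
              ((P i' : List E) : Multiset E) := by
            rw [Multiset.coe_add, List.take_append_drop]
          rw [e1, e2, ← e3, ← e4]
          abel
  have hcol : colWt P' = colWt P := by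
    unfold colWt
    rw [prod_pathWt_eq Finset.univ P', prod_pathWt_eq Finset.univ P, hms]
  refine ⟨?_, ?_, hms, hcol, ?_⟩
  · -- TuplePaths
    intro j
    rcases eq_or_ne j i with rfl | hj
    · rw [hP'i]
      simpa [Equiv.Perm.mul_apply, Equiv.swap_apply_left] using wA
    rcases eq_or_ne j i' with rfl | hj'
    · rw [hP'i']
      simpa [Equiv.Perm.mul_apply, Equiv.swap_apply_right] using wB
    · rw [hP'j j hj hj']
      simpa [Equiv.Perm.mul_apply, Equiv.swap_apply_of_ne_of_ne hj hj'] using hP j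
  · -- P' ≠ P
    intro heq
    have hAi : (P i).take q ++ (P i').drop q' = P i := by rw [← hP'i, heq]
    have hlen : ((P i).take q).length = q := by
      rw [List.length_take]; omega
    have hdrop : (P i').drop q' = (P i).drop q := by
      calc (P i').drop q'
          = List.drop ((P i).take q).length ((P i).take q ++ (P i').drop q') := by
            rw [List.drop_left]
        _ = List.drop ((P i).take q).length (P i) := by rw [hAi]
        _ = (P i).drop q := by rw [hlen]
    have hbb : b (π i') = b (π i) := by
      rw [hdrop] at hwi'B
      exact isWalkFrom_unique hwi'B hwiB
    exact hne' (π.injective (hb hbb))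
  · -- sign
    rw [map_mul, Equiv.Perm.sign_swap hne, mul_neg_one]

end PathMatrix
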